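/- Let K ⊆ [0,1] be the middle-thirds Cantor set. Then for every Borel set F ⊆ ℝ, the one-dimensional Lebesgue measure satisfies m_1(F + K) ≥ (1/2) · m_1(F)^γ, where γ = 1 − log 2/log 3. -/

import Mathlib

open MeasureTheory Set
open scoped Pointwise ENNReal

/-- The middle-thirds Cantor set `{ Σ_{j≥1} s_j 3^{−j} : s_j ∈ {0,2} }`. -/
def middleThirdsCantor : Set ℝ :=
  {x | ∃ s : ℕ → ℕ, (∀ j, s j = 0 ∨ s j = 2) ∧ x = ∑' j : ℕ, (s j : ℝ) / 3 ^ (j + 1)}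

namespace CantorAux

noncomputable def gam : ℝ := 1 - Real.log 2 / Real.log 3

lemma log3_pos : 0 < Real.log 3 := Real.log_pos (by norm_num)

lemma ratio_ge_half : (1/2 : ℝ) ≤ Real.log 2 / Real.log 3 := by
  rw [le_div_iff₀ log3_pos]
  have h : Real.log 3 ≤ 2 * Real.log 2 := by
    have h4 : Real.log 4 = 2 * Real.log 2 := by
      rw [show (4:ℝ) = 2^(2:ℕ) by norm_num, Real.log_pow]; push_cast; ring
    rw [← h4]; exact Real.log_le_log (by norm_num) (by norm_num)
  linarith

lemma ratio_le_3quarter : Real.log 2 / Real.log 3 ≤ (3/4 : ℝ) := by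
  rw [div_le_iff₀ log3_pos]
  have h : (4:ℝ) * Real.log 2 ≤ 3 * Real.log 3 := by
    have h16 : Real.log 16 = 4 * Real.log 2 := by
      rw [show (16:ℝ) = 2^(4:ℕ) by norm_num, Real.log_pow]; push_cast; ring
    have h27 : Real.log 27 = 3 * Real.log 3 := by
      rw [show (27:ℝ) = 3^(3:ℕ) by norm_num, Real.log_pow]; push_cast; ring
    rw [← h16, ← h27]
    exact Real.log_le_log (by norm_num) (by norm_num)
  linarith

lemma gam_lt_one : gam < 1 := by
  have h2 : 0 < Real.log 2 := Real.log_pos (by norm_num)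
  have h3 := log3_pos
  have : 0 < Real.log 2 / Real.log 3 := div_pos h2 h3
  unfold gam; linarith

lemma quarter_le_gam : (1/4 : ℝ) ≤ gam := by
  have := ratio_le_3quarter; unfold gam; linarith

lemma gam_pos : 0 < gam := lt_of_lt_of_le (by norm_num) quarter_le_gam

lemma gam_le_half : gam ≤ (1/2 : ℝ) := by
  have := ratio_ge_half; unfold gam; linarith

lemma three_rpow_one_sub_gam : (3:ℝ) ^ (1 - gam) = 2 := by
  unfold gam
  have h3 := log3_pos
  rw [show (1 : ℝ) - (1 - Real.log 2 / Real.log 3) = Real.log 2 / Real.log 3 by ring]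
  rw [Real.rpow_def_of_pos (by norm_num)]
  rw [mul_div_assoc', mul_comm, mul_div_assoc, div_self h3.ne', mul_one, Real.exp_log (by norm_num)]

lemma three_rpow_gam : (3:ℝ) ^ gam = 3/2 := by
  have h := three_rpow_one_sub_gam
  have h1 : (3:ℝ) ^ (1 - gam) * (3:ℝ) ^ gam = 3 := by
    rw [← Real.rpow_add (by norm_num)]; norm_num
  rw [h] at h1; linarith

lemma third_rpow : ((1:ℝ)/3) ^ (1 - gam) = 1/2 := by
  rw [Real.div_rpow (by norm_num) (by norm_num), Real.one_rpow, three_rpow_one_sub_gam]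

-- The key one-variable inequality
lemma onevar {t : ℝ} (ht0 : 0 ≤ t) (ht1 : t ≤ 1) :
    2 * (1 + 2*t) ^ gam ≤ 2 + t ^ gam := by
  have hγ0 := gam_pos
  have hγ1 := gam_lt_one
  rcases eq_or_lt_of_le ht0 with h0 | ht0'
  · rw [← h0]
    simp [Real.one_rpow, Real.zero_rpow hγ0.ne']
  rcases le_total t (1/3) with hc | hc
  · -- Bernoulli route: t ≤ 1/3
    have htg : 0 < t ^ gam := Real.rpow_pos_of_pos ht0' _
    have h1 : t ^ (1 - gam) ≤ (1/2 : ℝ) := by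
      calc t ^ (1-gam) ≤ (1/3 : ℝ) ^ (1-gam) :=
            Real.rpow_le_rpow ht0 hc (by linarith)
        _ = 1/2 := third_rpow
    have hsplit : t ^ (1-gam) * t ^ gam = t := by
      rw [← Real.rpow_add ht0']; norm_num
    have key : 4 * gam * t ≤ t ^ gam := by
      have h2 : 4 * gam * (t ^ (1-gam)) ≤ 1 := by
        have := gam_le_half
        nlinarith [Real.rpow_nonneg ht0 (1-gam)]
      calc 4 * gam * t = (4 * gam * t ^ (1-gam)) * t ^ gam := by
            rw [mul_assoc (4*gam), hsplit]
        _ ≤ 1 * t ^ gam := mul_le_mul_of_nonneg_right h2 htg.le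
        _ = t ^ gam := one_mul _
    have hq : (1:ℝ) ≤ 1/gam := by
      rw [le_div_iff₀ hγ0]; linarith
    have hB := one_add_mul_self_le_rpow_one_add
      (s := t^gam/2) (by linarith : (-1:ℝ) ≤ t^gam/2) hq
    have h3 : 1 + 2*t ≤ (1 + t^gam/2) ^ (1/gam : ℝ) := by
      refine le_trans ?_ hB
      have : 2*t ≤ 1/gam * (t^gam/2) := by
        rw [div_mul_eq_mul_div, one_mul, le_div_iff₀ hγ0]
        linarith
      linarith
    have hX0 : (0:ℝ) ≤ 1 + t^gam/2 := by linarith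
    have h4 : (1 + 2*t) ^ gam ≤ 1 + t^gam/2 := by
      calc (1 + 2*t) ^ gam ≤ ((1 + t^gam/2) ^ (1/gam : ℝ)) ^ gam :=
            Real.rpow_le_rpow (by linarith) h3 hγ0.le
        _ = (1 + t^gam/2) ^ ((1/gam) * gam) := by
            rw [← Real.rpow_mul hX0]
        _ = 1 + t^gam/2 := by
            rw [one_div, inv_mul_cancel₀ hγ0.ne', Real.rpow_one]
    linarith
  · -- t ∈ [1/3, 1]
    set u : ℝ := 1 - t with hu
    have hu0 : 0 ≤ u := by simp [hu]; linarith
    have hu23 : u ≤ 2/3 := by simp [hu]; linarith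
    have ht1' : 0 < 1 - u := by simp [hu]; linarith
    -- step 1 : 2*(1+2t)^gam = 3*(1 - 2u/3)^gam
    have e1 : 2 * (1 + 2*t) ^ gam = 3 * (1 - 2*u/3) ^ gam := by
      have : (1 + 2*t) = 3 * (1 - 2*u/3) := by rw [hu]; ring
      rw [this, Real.mul_rpow (by norm_num) (by rw [hu]; linarith), three_rpow_gam]
      ring
    -- step 2 : (1 - 2u/3)^gam ≤ 1 - gam*(2u/3)
    have e2 : (1 - 2*u/3) ^ gam ≤ 1 - gam * (2*u/3) := by
      have := rpow_one_add_le_one_add_mul_self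
        (s := -(2*u/3)) (by linarith) hγ0.le hγ1.le
      calc (1 - 2*u/3) ^ gam = (1 + -(2*u/3)) ^ gam := by ring_nf
        _ ≤ 1 + gam * (-(2*u/3)) := this
        _ = 1 - gam * (2*u/3) := by ring
    -- step 3 : (1-u)^gam ≥ 1 - 2*gam*u
    have e3 : 1 - 2*gam*u ≤ (1-u) ^ gam := by
      rcases eq_or_lt_of_le hu0 with h0 | hu0'
      · rw [← h0]; simp
      have hw : (0:ℝ) ≤ u/(1-u) := by positivity
      have hB2 := rpow_one_add_le_one_add_mul_self
        (s := u/(1-u)) (by linarith) hγ0.le hγ1.le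
      have hrec : (1 + u/(1-u)) = (1-u)⁻¹ := by
        field_simp
        ring
      rw [hrec, Real.inv_rpow ht1'.le] at hB2
      have hP : 0 < (1-u) ^ gam := Real.rpow_pos_of_pos ht1' _
      have hD : 0 < 1 + gam * (u/(1-u)) := by positivity
      have h5 : 1 ≤ ((1-u) ^ gam) * (1 + gam*(u/(1-u))) := by
        have h := mul_le_mul_of_nonneg_left hB2 hP.le
        rw [mul_inv_cancel₀ hP.ne'] at h
        linarith
      have h6 : (1 - 2*gam*u) * (1 + gam*(u/(1-u))) ≤ 1 := by
        have expand : (1 - 2*gam*u) * (1 + gam*(u/(1-u)))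
            = ((1 - 2*gam*u) * ((1-u) + gam*u)) / (1-u) := by
          field_simp
        rw [expand, div_le_one ht1']
        have key0 : 0 ≤ 1 - 2*u + 2*gam*u := by
          nlinarith [mul_nonneg hu0'.le (by linarith [quarter_le_gam] : (0:ℝ) ≤ gam - 1/4)]
        nlinarith [mul_nonneg (mul_nonneg hγ0.le hu0'.le) key0]
      exact le_of_mul_le_mul_right (le_trans h6 h5) hD
    -- combine
    have e4 : 3 * (1 - gam*(2*u/3)) ≤ 2 + (1-u) ^ gam := by
      have : 3 * (1 - gam*(2*u/3)) = 3 - 2*gam*u := by ring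
      rw [this]
      linarith
    calc 2 * (1+2*t) ^ gam = 3 * (1 - 2*u/3) ^ gam := e1
      _ ≤ 3 * (1 - gam * (2*u/3)) := by linarith
      _ ≤ 2 + (1-u) ^ gam := e4
      _ = 2 + t ^ gam := by
          have h : 1 - u = t := by rw [hu]; ring
          rw [h]

lemma spade_sorted {a b c : ℝ} (hc : 0 ≤ c) (hcb : c ≤ b) (hba : b ≤ a) :
    2 * (a+b+c) ^ gam ≤ 2 * a ^ gam + b ^ gam := by
  have hb : 0 ≤ b := le_trans hc hcb
  have ha : 0 ≤ a := le_trans hb hba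
  rcases eq_or_lt_of_le ha with h0 | ha'
  · have hb0 : b = 0 := le_antisymm (by linarith) hb
    have hc0 : c = 0 := le_antisymm (by linarith) hc
    rw [← h0, hb0, hc0]
    simp [Real.zero_rpow gam_pos.ne']
  · have step1 : 2 * (a+b+c) ^ gam ≤ 2 * (a+2*b) ^ gam := by
      have := Real.rpow_le_rpow (by linarith) (by linarith : a+b+c ≤ a+2*b) gam_pos.le
      linarith
    set t : ℝ := b / a with htdef
    have ht0 : 0 ≤ t := div_nonneg hb ha'.le
    have ht1 : t ≤ 1 := div_le_one_of_le₀ hba ha'.le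
    have hab : a + 2*b = a * (1 + 2*t) := by
      rw [htdef]; field_simp
    have hat : a * t = b := by rw [htdef]; field_simp
    have expand : (a+2*b) ^ gam = a ^ gam * (1+2*t) ^ gam := by
      rw [hab, Real.mul_rpow ha'.le (by linarith)]
    have hone := onevar ht0 ht1
    have hag : 0 ≤ a ^ gam := Real.rpow_nonneg ha'.le _
    have final : 2 * (a+2*b) ^ gam ≤ 2 * a ^ gam + b ^ gam := by
      have h2 : a ^ gam * (2 * (1+2*t) ^ gam) ≤ a ^ gam * (2 + t ^ gam) :=
        mul_le_mul_of_nonneg_left hone hag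
      have h3 : a ^ gam * t ^ gam = b ^ gam := by
        rw [← Real.mul_rpow ha'.le ht0, hat]
      calc 2 * (a+2*b) ^ gam = a ^ gam * (2 * (1+2*t) ^ gam) := by rw [expand]; ring
        _ ≤ a ^ gam * (2 + t ^ gam) := h2
        _ = 2 * a ^ gam + b ^ gam := by rw [mul_add, h3]; ring
    linarith

lemma spade {a b c : ℝ} (ha : 0 ≤ a) (hb : 0 ≤ b) (hc : 0 ≤ c) :
    2 * (a+b+c) ^ gam ≤ (max a b) ^ gam + (max b c) ^ gam + (max c a) ^ gam := by
  rcases le_total a b with hab | hab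
  · rcases le_total b c with hbc | hbc
    · -- c ≥ b ≥ a
      rw [max_eq_right hab, max_eq_right hbc, max_eq_left (le_trans hab hbc)]
      have := spade_sorted ha hab hbc
      rw [show c+b+a = a+b+c by ring] at this
      linarith
    · rcases le_total a c with hac | hac
      · -- b ≥ c ≥ a
        rw [max_eq_right hab, max_eq_left hbc, max_eq_left hac]
        have := spade_sorted ha hac hbc
        rw [show b+c+a = a+b+c by ring] at this
        linarith
      · -- b ≥ a ≥ c
        rw [max_eq_right hab, max_eq_left hbc, max_eq_right hac]
        have := spade_sorted hc hac hab
        rw [show b+a+c = a+b+c by ring] at this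
        linarith
  · rcases le_total a c with hac | hac
    · -- c ≥ a ≥ b
      rw [max_eq_left hab, max_eq_right (le_trans hab hac), max_eq_left hac]
      have := spade_sorted hb hab hac
      rw [show c+a+b = a+b+c by ring] at this
      linarith
    · rcases le_total b c with hbc | hbc
      · -- a ≥ c ≥ b
        rw [max_eq_left hab, max_eq_right hbc, max_eq_right hac]
        have := spade_sorted hb hbc hac
        rw [show a+c+b = a+b+c by ring] at this
        linarith
      · -- a ≥ b ≥ c
        rw [max_eq_left hab, max_eq_left hbc, max_eq_right hac]
        have := spade_sorted hc hbc hab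
        rw [show a+b+c = a+b+c by ring] at this
        linarith

/-- `{0,2}`-digit numbers in base 3, with `n` digits. -/
def D : ℕ → Finset ℤ
  | 0 => {0}
  | n+1 => (D n).image (fun d => 3*d) ∪ (D n).image (fun d => 3*d + 2)

lemma rpow_card_le_card (m : ℕ) : (m:ℝ) ^ gam ≤ (m:ℝ) := by
  rcases Nat.eq_zero_or_pos m with h | h
  · simp [h, Real.zero_rpow gam_pos.ne']
  · have h1 : (1:ℝ) ≤ (m:ℝ) := by exact_mod_cast h
    calc (m:ℝ) ^ gam ≤ (m:ℝ) ^ (1:ℝ) :=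
          Real.rpow_le_rpow_of_exponent_le h1 gam_lt_one.le
      _ = m := Real.rpow_one _

lemma filter_mod3_card (T : Finset ℤ) :
    (T.filter (fun a => a % 3 = 0)).card + (T.filter (fun a => a % 3 = 1)).card
      + (T.filter (fun a => a % 3 = 2)).card = T.card := by
  classical
  have d12 : Disjoint (T.filter (fun a => a % 3 = 1)) (T.filter (fun a => a % 3 = 2)) := by
    simp only [Finset.disjoint_left, Finset.mem_filter]
    rintro a ⟨_, h⟩ ⟨_, h'⟩; omega
  have d012 : Disjoint (T.filter (fun a => a % 3 = 0))
      ((T.filter (fun a => a % 3 = 1)) ∪ (T.filter (fun a => a % 3 = 2))) := by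
    simp only [Finset.disjoint_left, Finset.mem_filter, Finset.mem_union]
    rintro a ⟨_, h⟩ (⟨_, h'⟩|⟨_, h'⟩) <;> omega
  rw [add_assoc, ← Finset.card_union_of_disjoint d12, ← Finset.card_union_of_disjoint d012]
  congr 1
  ext a
  simp only [Finset.mem_union, Finset.mem_filter]
  constructor
  · rintro (h|h|h) <;> exact h.1
  · intro ha
    have h3 : a % 3 = 0 ∨ a % 3 = 1 ∨ a % 3 = 2 := by omega
    tauto

lemma inj_bound (n : ℕ) (A : Finset ℤ) (t r c : ℤ) (ht : t = 0 ∨ t = 1 ∨ t = 2)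
    (hs : 3*c + t - r = 0 ∨ 3*c + t - r = 2) :
    (((A.filter (fun a => a % 3 = r)).image (fun a => a / 3)) + D n).card
      ≤ ((A + D (n+1)).filter (fun z => z % 3 = t)).card := by
  classical
  apply Finset.card_le_card_of_injOn (fun m => 3*(m+c) + t)
  · intro m hm
    simp only [Finset.mem_coe] at hm
    rw [Finset.mem_add] at hm
    obtain ⟨x, hx, d, hd, hxd⟩ := hm
    rw [Finset.mem_image] at hx
    obtain ⟨a, ha, rfl⟩ := hx
    rw [Finset.mem_filter] at ha
    obtain ⟨haA, har⟩ := ha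
    simp only [Finset.mem_coe, Finset.mem_filter]
    constructor
    · rw [Finset.mem_add]
      refine ⟨a, haA, 3*d + (3*c + t - r), ?_, by omega⟩
      show 3*d + (3*c + t - r) ∈ D (n+1)
      rcases hs with hs | hs <;> rw [hs]
      · simp only [D, Finset.mem_union, Finset.mem_image]
        exact Or.inl ⟨d, hd, by ring⟩
      · simp only [D, Finset.mem_union, Finset.mem_image]
        exact Or.inr ⟨d, hd, by ring⟩
    · omega
  · intro x _ y _ h; simp only [] at h; omega

/-- The key discrete inequality. -/
lemma discrete (n : ℕ) : ∀ A : Finset ℤ,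
    (2:ℝ)^n * (A.card : ℝ) ^ gam ≤ ((A + D n).card : ℝ) := by
  induction n with
  | zero =>
    intro A
    have h : A + D 0 = A := by
      ext z; simp [D, Finset.mem_add]
    rw [h]
    simpa using rpow_card_le_card A.card
  | succ n ih =>
    intro A
    classical
    set N0 := (A.filter (fun a => a % 3 = 0)).card with hN0
    set N1 := (A.filter (fun a => a % 3 = 1)).card with hN1
    set N2 := (A.filter (fun a => a % 3 = 2)).card with hN2
    have cardim : ∀ r : ℤ, ((A.filter (fun a => a % 3 = r)).image (fun a => a / 3)).card
        = (A.filter (fun a => a % 3 = r)).card := by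
      intro r
      apply Finset.card_image_of_injOn
      intro x hx y hy hxy
      simp only [Finset.mem_coe, Finset.mem_filter] at hx hy
      have h1 : x % 3 = y % 3 := by rw [hx.2, hy.2]
      simp only [] at hxy
      omega
    -- per-class bounds
    have ihbound : ∀ r : ℤ,
        (2:ℝ)^n * ((A.filter (fun a => a % 3 = r)).card : ℝ) ^ gam
          ≤ ((((A.filter (fun a => a % 3 = r)).image (fun a => a / 3)) + D n).card : ℝ) := by
      intro r
      have := ih ((A.filter (fun a => a % 3 = r)).image (fun a => a / 3))
      rwa [cardim r] at this
    set S := A + D (n+1) with hS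
    set S0 := S.filter (fun z => z % 3 = 0) with hS0
    set S1 := S.filter (fun z => z % 3 = 1) with hS1
    set S2 := S.filter (fun z => z % 3 = 2) with hS2
    -- six injection bounds
    have b00 : (((A.filter (fun a => a % 3 = 0)).image (fun a => a / 3)) + D n).card ≤ S0.card :=
      inj_bound n A 0 0 0 (by norm_num) (by norm_num)
    have b01 : (((A.filter (fun a => a % 3 = 1)).image (fun a => a / 3)) + D n).card ≤ S0.card :=
      inj_bound n A 0 1 1 (by norm_num) (by norm_num)
    have b11 : (((A.filter (fun a => a % 3 = 1)).image (fun a => a / 3)) + D n).card ≤ S1.card :=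
      inj_bound n A 1 1 0 (by norm_num) (by norm_num)
    have b12 : (((A.filter (fun a => a % 3 = 2)).image (fun a => a / 3)) + D n).card ≤ S1.card :=
      inj_bound n A 1 2 1 (by norm_num) (by norm_num)
    have b22 : (((A.filter (fun a => a % 3 = 2)).image (fun a => a / 3)) + D n).card ≤ S2.card :=
      inj_bound n A 2 2 0 (by norm_num) (by norm_num)
    have b20 : (((A.filter (fun a => a % 3 = 0)).image (fun a => a / 3)) + D n).card ≤ S2.card :=
      inj_bound n A 2 0 0 (by norm_num) (by norm_num)
    -- max bounds
    have pow2 : (0:ℝ) < 2^n := by positivity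
    have hmax : ∀ (x y : ℕ) (Scard : ℕ),
        (2:ℝ)^n * (x:ℝ)^gam ≤ Scard → (2:ℝ)^n * (y:ℝ)^gam ≤ Scard →
        (2:ℝ)^n * (max (x:ℝ) (y:ℝ))^gam ≤ Scard := by
      intro x y Sc hx hy
      rcases le_total (x:ℝ) (y:ℝ) with h | h
      · rwa [max_eq_right h]
      · rwa [max_eq_left h]
    have m0 : (2:ℝ)^n * (max (N0:ℝ) (N1:ℝ))^gam ≤ (S0.card : ℝ) := by
      apply hmax
      · exact le_trans (ihbound 0) (by exact_mod_cast b00)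
      · exact le_trans (ihbound 1) (by exact_mod_cast b01)
    have m1 : (2:ℝ)^n * (max (N1:ℝ) (N2:ℝ))^gam ≤ (S1.card : ℝ) := by
      apply hmax
      · exact le_trans (ihbound 1) (by exact_mod_cast b11)
      · exact le_trans (ihbound 2) (by exact_mod_cast b12)
    have m2 : (2:ℝ)^n * (max (N2:ℝ) (N0:ℝ))^gam ≤ (S2.card : ℝ) := by
      apply hmax
      · exact le_trans (ihbound 2) (by exact_mod_cast b22)
      · exact le_trans (ihbound 0) (by exact_mod_cast b20)
    -- assemble
    have hsp := spade (a := (N0:ℝ)) (b := (N1:ℝ)) (c := (N2:ℝ))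
      (by positivity) (by positivity) (by positivity)
    have hANsum : (A.card : ℝ) = (N0:ℝ) + N1 + N2 := by
      rw [hN0, hN1, hN2, ← filter_mod3_card A]; push_cast; ring
    have hScard : (S0.card : ℝ) + S1.card + S2.card = (S.card : ℝ) := by
      rw [hS0, hS1, hS2, ← filter_mod3_card S]; push_cast; ring
    calc (2:ℝ)^(n+1) * (A.card : ℝ) ^ gam
        = (2:ℝ)^n * (2 * ((N0:ℝ) + N1 + N2) ^ gam) := by rw [hANsum]; ring
      _ ≤ (2:ℝ)^n * ((max (N0:ℝ) (N1:ℝ))^gam + (max (N1:ℝ) (N2:ℝ))^gam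
            + (max (N2:ℝ) (N0:ℝ))^gam) := by
          apply mul_le_mul_of_nonneg_left hsp pow2.le
      _ = (2:ℝ)^n * (max (N0:ℝ) (N1:ℝ))^gam + (2:ℝ)^n * (max (N1:ℝ) (N2:ℝ))^gam
            + (2:ℝ)^n * (max (N2:ℝ) (N0:ℝ))^gam := by ring
      _ ≤ (S0.card : ℝ) + S1.card + S2.card := by linarith
      _ = (S.card : ℝ) := hScard

noncomputable def cf (b : ℕ → Bool) : ℝ := ∑' j : ℕ, (cond (b j) (2:ℝ) 0) / 3 ^ (j + 1)

lemma cantor_eq_range : middleThirdsCantor = Set.range cf := by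
  ext x
  constructor
  · rintro ⟨s, hs, rfl⟩
    refine ⟨fun j => decide (s j = 2), ?_⟩
    unfold cf
    congr 1
    ext j
    rcases hs j with h | h <;> simp [h]
  · rintro ⟨b, rfl⟩
    refine ⟨fun j => cond (b j) 2 0, fun j => by rcases Bool.dichotomy (b j) with h|h <;> simp [h], ?_⟩
    unfold cf
    congr 1
    ext j
    rcases Bool.dichotomy (b j) with h|h <;> simp [h]

lemma cf_continuous : Continuous cf := by
  apply continuous_tsum (u := fun j => 2 / 3 ^ (j+1))
  · intro i
    have h1 : Continuous (fun b : ℕ → Bool => b i) := continuous_apply i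
    have h2 : Continuous (fun v : Bool => (cond v (2:ℝ) 0)) := continuous_of_discreteTopology
    exact (h2.comp h1).div_const _
  · have h : Summable fun j : ℕ => (2/3 : ℝ) * (1/3)^j :=
      (summable_geometric_of_lt_one (by norm_num) (by norm_num)).mul_left _
    exact h.congr (fun j => by rw [pow_succ]; field_simp; rw [← mul_pow]; norm_num)
  · intro j b
    rcases Bool.dichotomy (b j) with h|h <;>
      simp [h, Real.norm_eq_abs, abs_div, abs_of_nonneg] <;> positivity

lemma cantor_compact : IsCompact middleThirdsCantor := by
  rw [cantor_eq_range]
  exact isCompact_range cf_continuous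





lemma D_digits (n : ℕ) : ∀ d ∈ D n, ∃ s : ℕ → ℕ,
    (∀ j, s j = 0 ∨ s j = 2) ∧ (d:ℝ) = ∑ j ∈ Finset.range n, (s j : ℝ) * 3^j := by
  induction n with
  | zero =>
    intro d hd
    simp only [D, Finset.mem_singleton] at hd
    exact ⟨fun _ => 0, fun _ => Or.inl rfl, by simp [hd]⟩
  | succ n ih =>
    intro d hd
    simp only [D, Finset.mem_union, Finset.mem_image] at hd
    have key : ∃ e : ℕ, (e = 0 ∨ e = 2) ∧ ∃ d' ∈ D n, d = 3*d' + e := by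
      rcases hd with ⟨d', hd', rfl⟩ | ⟨d', hd', rfl⟩
      · exact ⟨0, Or.inl rfl, d', hd', by ring⟩
      · exact ⟨2, Or.inr rfl, d', hd', by ring⟩
    obtain ⟨e, he, d', hd', rfl⟩ := key
    obtain ⟨s', hs', hsum⟩ := ih d' hd'
    refine ⟨fun j => if j = 0 then e else s' (j-1), ?_, ?_⟩
    · intro j
      by_cases h : j = 0 <;> simp [h, he, hs']
    · beta_reduce
      simp only [apply_ite (Nat.cast : ℕ → ℝ)]
      have h1 : ∑ j ∈ Finset.range (n+1), ((if j = 0 then (e:ℕ) else s' (j-1)) : ℝ) * 3^j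
          = (e:ℝ) + 3 * ∑ j ∈ Finset.range n, (s' j : ℝ) * 3^j := by
        rw [Finset.sum_range_succ']
        simp only [Nat.add_sub_cancel, Nat.succ_ne_zero, if_false, if_pos rfl, pow_zero, mul_one]
        rw [Finset.mul_sum]
        rw [add_comm]
        congr 1
        apply Finset.sum_congr rfl
        intro j _
        ring
      rw [h1, ← hsum]
      push_cast
      ring

lemma D_mem_cantor {n : ℕ} {d : ℤ} (hd : d ∈ D n) :
    (d:ℝ)/3^n ∈ middleThirdsCantor := by
  obtain ⟨s, hs, hsum⟩ := D_digits n d hd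
  refine ⟨fun k => if k < n then s (n - 1 - k) else 0, ?_, ?_⟩
  · intro j; by_cases h : j < n <;> simp [h, hs]
  · have hzero : ∀ k ∉ Finset.range n,
        (((if k < n then s (n - 1 - k) else 0 : ℕ)) : ℝ) / 3 ^ (k + 1) = 0 := by
      intro k hk
      simp only [Finset.mem_range, not_lt] at hk
      rw [if_neg (by omega)]
      simp
    rw [show (∑' (j : ℕ), ((fun k => if k < n then s (n - 1 - k) else 0) j : ℝ) / 3 ^ (j + 1))
        = ∑' (j : ℕ), (((if j < n then s (n - 1 - j) else 0 : ℕ)) : ℝ) / 3 ^ (j + 1) from rfl]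
    rw [tsum_eq_sum (s := Finset.range n) hzero]
    rw [hsum]
    rw [Finset.sum_div, ← Finset.sum_range_reflect (fun j => (s j : ℝ) * 3^j / 3^n) n]
    apply Finset.sum_congr rfl
    intro k hk
    simp only [Finset.mem_range] at hk
    rw [if_pos hk]
    rw [div_eq_div_iff (by positivity) (by positivity)]
    rw [mul_assoc, ← pow_add]
    congr 2
    omega

lemma zero_mem_cantor : (0:ℝ) ∈ middleThirdsCantor := by
  have := D_mem_cantor (n := 0) (d := 0) (by simp [D])
  simpa using this

/-! ### Geometry -/

lemma pow3_pos (n : ℕ) : (0:ℝ) < 3^n := by positivity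

/-- Sumset of a finite union of triadic cells with the Cantor set. -/
lemma cells_bound (n : ℕ) (A : Finset ℤ) :
    ENNReal.ofReal (((A + D n).card : ℝ) / 3^n)
      ≤ volume ((⋃ a ∈ A, Icc ((a:ℝ)/3^n) ((a+1)/3^n)) + middleThirdsCantor) := by
  classical
  set T := (⋃ a ∈ A, Icc ((a:ℝ)/3^n) ((a+1)/3^n)) + middleThirdsCantor with hT
  have hsub : (⋃ z ∈ A + D n, Ico ((z:ℝ)/3^n) ((z+1)/3^n)) ⊆ T := by
    intro x hx
    simp only [mem_iUnion, exists_prop] at hx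
    obtain ⟨z, hz, hxz⟩ := hx
    rw [Finset.mem_add] at hz
    obtain ⟨a, ha, d, hd, rfl⟩ := hz
    refine ⟨x - (d:ℝ)/3^n, ?_, (d:ℝ)/3^n, D_mem_cantor hd, by ring⟩
    simp only [mem_iUnion, exists_prop]
    refine ⟨a, ha, ?_⟩
    obtain ⟨h1, h2⟩ := hxz
    constructor
    · rw [le_sub_iff_add_le, ← add_div]
      calc ((a:ℝ) + d)/3^n = (((a + d : ℤ)):ℝ)/3^n := by push_cast; ring
        _ ≤ x := h1
    · rw [sub_le_iff_le_add, ← add_div]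
      calc x ≤ (((a + d : ℤ) + 1):ℝ)/3^n := h2.le
        _ = ((a:ℝ) + 1 + d)/3^n := by push_cast; ring
  calc ENNReal.ofReal (((A + D n).card : ℝ) / 3^n)
      = volume (⋃ z ∈ A + D n, Ico ((z:ℝ)/3^n) ((z+1)/3^n)) := by
        rw [measure_biUnion_finset]
        · rw [Finset.sum_congr rfl (g := fun z => ENNReal.ofReal (1/3^n))
            (fun z _ => by rw [Real.volume_Ico]; congr 1; ring)]
          rw [Finset.sum_const, nsmul_eq_mul]
          rw [← ENNReal.ofReal_natCast ((A + D n).card), ← ENNReal.ofReal_mul (by positivity)]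
          congr 1
          ring
        · intro z hz z' hz' hne
          simp only [Function.onFun]
          apply Set.disjoint_left.2
          intro x hx hx'
          obtain ⟨h1, h2⟩ := hx
          obtain ⟨h3, h4⟩ := hx'
          apply hne
          have e1 : (z:ℝ) < z' + 1 := by
            have := lt_of_le_of_lt h1 h4
            have h3n := pow3_pos n
            rw [div_lt_div_iff₀ h3n h3n] at this
            nlinarith [pow3_pos n]
          have e2 : (z':ℝ) < z + 1 := by
            have := lt_of_le_of_lt h3 h2
            have h3n := pow3_pos n
            rw [div_lt_div_iff₀ h3n h3n] at this
            nlinarith [pow3_pos n]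
          have : z < z' + 1 := by exact_mod_cast e1
          have : z' < z + 1 := by exact_mod_cast e2
          omega
        · intro z hz
          exact measurableSet_Ico
    _ ≤ volume T := measure_mono hsub

set_option maxHeartbeats 1000000 in
lemma compact_bound (C : Set ℝ) (hC : IsCompact C) :
    (volume C) ^ gam ≤ volume (C + middleThirdsCantor) := by
  classical
  rcases C.eq_empty_or_nonempty with rfl | hne
  · simp [ENNReal.zero_rpow_of_pos gam_pos]
  obtain ⟨lo, hlo⟩ := hC.bddBelow
  obtain ⟨hi, hhi⟩ := hC.bddAbove
  set An : ℕ → Finset ℤ := fun n =>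
    (Finset.Icc ⌊lo * 3^n⌋ ⌊hi * 3^n⌋).filter (fun a => ∃ x ∈ C, a = ⌊x * 3^n⌋) with hAn
  set Cn : ℕ → Set ℝ := fun n => ⋃ a ∈ An n, Icc ((a:ℝ)/3^n) ((a+1)/3^n) with hCn
  have hmemAn : ∀ n, ∀ x ∈ C, ⌊x * 3^n⌋ ∈ An n := by
    intro n x hx
    rw [hAn, Finset.mem_filter, Finset.mem_Icc]
    refine ⟨⟨?_, ?_⟩, x, hx, rfl⟩
    · exact Int.floor_le_floor (mul_le_mul_of_nonneg_right (hlo hx) (pow3_pos n).le)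
    · exact Int.floor_le_floor (mul_le_mul_of_nonneg_right (hhi hx) (pow3_pos n).le)
  have hmemcell : ∀ (n : ℕ) (x : ℝ), x ∈ Icc ((⌊x * 3^n⌋:ℝ)/3^n) ((⌊x * 3^n⌋+1)/3^n) := by
    intro n x
    constructor
    · rw [div_le_iff₀ (pow3_pos n)]
      exact Int.floor_le _
    · rw [le_div_iff₀ (pow3_pos n)]
      exact (Int.lt_floor_add_one _).le
  have hCsub : ∀ n, C ⊆ Cn n := by
    intro n x hx
    rw [hCn]
    simp only [mem_iUnion, exists_prop]
    exact ⟨⌊x * 3^n⌋, hmemAn n x hx, hmemcell n x⟩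
  have hCncpt : ∀ n, IsCompact (Cn n) :=
    fun n => ((An n).finite_toSet).isCompact_biUnion (fun a _ => isCompact_Icc)
  have hanti : Antitone Cn := by
    apply antitone_nat_of_succ_le
    intro n x hx
    rw [hCn] at hx ⊢
    simp only [mem_iUnion, exists_prop] at hx ⊢
    obtain ⟨a', ha', hxa⟩ := hx
    rw [hAn, Finset.mem_filter] at ha'
    obtain ⟨-, y, hy, rfl⟩ := ha'
    refine ⟨⌊y * 3^n⌋, hmemAn n y hy, ?_⟩
    set a := ⌊y * 3^n⌋ with ha
    have hy3 : y * 3^(n+1) = (y * 3^n) * 3 := by ring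
    have hfl : 3*a ≤ ⌊y * 3^(n+1)⌋ ∧ ⌊y * 3^(n+1)⌋ ≤ 3*a + 2 := by
      constructor
      · apply Int.le_floor.2
        rw [hy3]
        push_cast
        nlinarith [Int.floor_le (y * 3^n)]
      · have h1 : (⌊y * 3^(n+1)⌋ : ℝ) ≤ y * 3^(n+1) := Int.floor_le _
        have h2 : y * 3^n < a + 1 := Int.lt_floor_add_one _
        have h3 : y * 3^(n+1) < 3*a + 3 := by rw [hy3]; nlinarith
        have h4 : (⌊y * 3^(n+1)⌋:ℝ) < 3*a + 3 := lt_of_le_of_lt h1 h3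
        have := (by exact_mod_cast h4 : ⌊y * 3^(n+1)⌋ < 3*(a : ℤ) + 3)
        omega
    obtain ⟨hf1, hf2⟩ := hfl
    obtain ⟨hx1, hx2⟩ := hxa
    have h3n1 : (0:ℝ) < 3^(n+1) := pow3_pos (n+1)
    have hfr1 : ((3*a : ℤ):ℝ) ≤ ((⌊y * 3^(n+1)⌋ : ℤ):ℝ) := by exact_mod_cast hf1
    have hfr2 : ((⌊y * 3^(n+1)⌋ : ℤ):ℝ) ≤ ((3*a + 2 : ℤ):ℝ) := by exact_mod_cast hf2
    constructor
    · calc ((a:ℝ))/3^n = ((3*a:ℤ):ℝ)/3^(n+1) := by push_cast; rw [pow_succ]; field_simp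
        _ ≤ ((⌊y * 3^(n+1)⌋:ℤ):ℝ)/3^(n+1) := by gcongr
        _ ≤ x := hx1
    · calc x ≤ ((⌊y * 3^(n+1)⌋:ℝ)+1)/3^(n+1) := hx2
        _ ≤ ((3*a+3 : ℤ):ℝ)/3^(n+1) := by
            gcongr
            push_cast at hfr2 ⊢
            linarith
        _ = ((a:ℝ)+1)/3^n := by push_cast; rw [pow_succ]; field_simp
  -- intersection of the cell-covers is C
  have hiInterC : ⋂ n, Cn n = C := by
    apply Subset.antisymm
    · intro x hx
      have hcl : x ∈ closure C := by
        rw [Metric.mem_closure_iff]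
        intro ε hε
        obtain ⟨n, hn⟩ := exists_pow_lt_of_lt_one hε (by norm_num : (1/3:ℝ) < 1)
        have hxn := (mem_iInter.1 hx) n
        rw [hCn] at hxn
        simp only [mem_iUnion, exists_prop] at hxn
        obtain ⟨a, ha, hxa⟩ := hxn
        rw [hAn, Finset.mem_filter] at ha
        obtain ⟨-, y, hy, rfl⟩ := ha
        refine ⟨y, hy, ?_⟩
        have hyc := hmemcell n y
        have hsum : ((⌊y * 3^n⌋:ℝ)+1)/3^n = (⌊y * 3^n⌋:ℝ)/3^n + 1/3^n := by ring
        have h13 : (1/3:ℝ)^n = 1/3^n := by rw [div_pow]; norm_num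
        rw [Real.dist_eq, abs_sub_lt_iff]
        obtain ⟨c1, c2⟩ := hxa
        obtain ⟨c3, c4⟩ := hyc
        rw [hsum] at c2 c4
        rw [h13] at hn
        constructor <;> linarith
      rwa [hC.isClosed.closure_eq] at hcl
    · exact subset_iInter hCsub
  -- volume of Cn
  have hvol : ∀ n, volume (Cn n) ≤ ENNReal.ofReal (((An n).card : ℝ)/3^n) := by
    intro n
    rw [hCn]
    calc volume (⋃ a ∈ An n, Icc ((a:ℝ)/3^n) ((a+1)/3^n))
        ≤ ∑ a ∈ An n, volume (Icc ((a:ℝ)/3^n) ((a+1)/3^n)) := measure_biUnion_finset_le _ _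
      _ = ∑ _a ∈ An n, ENNReal.ofReal (1/3^n) := by
          apply Finset.sum_congr rfl
          intro a _
          rw [Real.volume_Icc]
          congr 1
          ring
      _ = ENNReal.ofReal (((An n).card : ℝ)/3^n) := by
          rw [Finset.sum_const, nsmul_eq_mul,
            ← ENNReal.ofReal_natCast ((An n).card), ← ENNReal.ofReal_mul (by positivity)]
          congr 1
          ring
  -- the per-level key estimate
  have key : ∀ n, (volume C)^gam ≤ volume (Cn n + middleThirdsCantor) := by
    intro n
    have hd := discrete n (An n)
    have hreal : (((An n).card : ℝ)/3^n)^gam ≤ (((An n + D n).card : ℝ))/3^n := by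
      have hpow : ((3:ℝ)^n)^gam = (3:ℝ)^n/2^n := by
        have h1 : ((3:ℝ)^n)^gam = ((3:ℝ)^gam)^n := by
          rw [← Real.rpow_natCast 3 n, ← Real.rpow_mul (by norm_num), mul_comm,
            Real.rpow_mul (by norm_num), Real.rpow_natCast]
        rw [h1, three_rpow_gam, div_pow]
      rw [Real.div_rpow (by positivity) (pow3_pos n).le, hpow]
      rw [div_le_div_iff₀ (by positivity) (pow3_pos n)]
      have hmul := mul_le_mul_of_nonneg_right hd (by positivity : (0:ℝ) ≤ 3^n/2^n)
      calc ((An n).card:ℝ)^gam * 3^n = ((2:ℝ)^n * ((An n).card:ℝ)^gam) * (3^n/2^n) := by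
            field_simp
        _ ≤ ((An n + D n).card : ℝ) * (3^n/2^n) := hmul
    calc (volume C)^gam
        ≤ (volume (Cn n))^gam := ENNReal.rpow_le_rpow (measure_mono (hCsub n)) gam_pos.le
      _ ≤ (ENNReal.ofReal (((An n).card:ℝ)/3^n))^gam :=
          ENNReal.rpow_le_rpow (hvol n) gam_pos.le
      _ = ENNReal.ofReal ((((An n).card:ℝ)/3^n)^gam) :=
          ENNReal.ofReal_rpow_of_nonneg (x := ((An n).card:ℝ)/3^n) (by positivity) gam_pos.le
      _ ≤ ENNReal.ofReal (((An n + D n).card:ℝ)/3^n) := ENNReal.ofReal_le_ofReal hreal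
      _ ≤ volume (Cn n + middleThirdsCantor) := by rw [hCn]; exact cells_bound n (An n)
  -- the sumsets intersect down to C + K
  have hiInterS : ⋂ n, (Cn n + middleThirdsCantor) = C + middleThirdsCantor := by
    apply Subset.antisymm
    · intro z hz
      set W := (fun y => z - y) '' middleThirdsCantor with hW
      have hWcpt : IsCompact W := cantor_compact.image (continuous_const.sub continuous_id)
      have hTne : ∀ n, (Cn n ∩ W).Nonempty := by
        intro n
        have hzn := (mem_iInter.1 hz) n
        obtain ⟨c, hc, k, hk, hck⟩ := Set.mem_add.1 hzn
        exact ⟨c, hc, k, hk, by rw [← hck]; ring⟩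
      have hcap := IsCompact.nonempty_iInter_of_directed_nonempty_isCompact_isClosed
        (fun n => Cn n ∩ W)
        (fun i j => ⟨max i j,
          inter_subset_inter (hanti (le_max_left i j)) subset_rfl,
          inter_subset_inter (hanti (le_max_right i j)) subset_rfl⟩)
        hTne
        (fun n => (hCncpt n).inter_right hWcpt.isClosed)
        (fun n => (hCncpt n).isClosed.inter hWcpt.isClosed)
      obtain ⟨c, hc⟩ := hcap
      rw [← iInter_inter, hiInterC] at hc
      obtain ⟨hcC, k, hk, hck⟩ := hc
      exact ⟨c, hcC, k, hk, by rw [← hck]; ring⟩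
    · exact subset_iInter (fun n => add_subset_add_right (hCsub n))
  -- conclude by continuity from above
  have htend := tendsto_measure_iInter_atTop (μ := volume)
    (s := fun n => Cn n + middleThirdsCantor)
    (fun n => ((hCncpt n).add cantor_compact).isClosed.measurableSet.nullMeasurableSet)
    (fun i j hij => add_subset_add_right (hanti hij))
    ⟨0, ((hCncpt 0).add cantor_compact).measure_lt_top.ne⟩
  rw [hiInterS] at htend
  exact ge_of_tendsto' htend key

end CantorAux

open CantorAux

theorem cantor_sumset_measure_bound (F : Set ℝ) (hF : MeasurableSet F) :
    volume F ^ (1 - Real.log 2 / Real.log 3) / 2 ≤ volume (F + middleThirdsCantor) := by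
  have hFsub : F ⊆ F + middleThirdsCantor :=
    fun x hx => ⟨x, hx, 0, zero_mem_cantor, add_zero x⟩
  rw [show (1 - Real.log 2 / Real.log 3) = gam from rfl]
  have main : volume F ^ gam ≤ volume (F + middleThirdsCantor) := by
    by_cases htop : volume F = ⊤
    · have h2 : volume (F + middleThirdsCantor) = ⊤ :=
        top_le_iff.1 (htop ▸ measure_mono hFsub)
      rw [h2]; exact le_top
    · by_contra hlt
      push_neg at hlt
      obtain ⟨b, hb1, hb2⟩ := exists_between hlt
      have hrlt : b ^ gam⁻¹ < volume F := by
        have h := ENNReal.rpow_lt_rpow hb2 (by rw [inv_pos]; exact gam_pos)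
        rwa [← ENNReal.rpow_mul, mul_inv_cancel₀ gam_pos.ne', ENNReal.rpow_one] at h
      obtain ⟨K, hKF, hKcpt, hKgt⟩ := hF.exists_lt_isCompact hrlt
      have h1 : b ≤ volume K ^ gam := by
        have h := ENNReal.rpow_le_rpow hKgt.le gam_pos.le
        rwa [← ENNReal.rpow_mul, inv_mul_cancel₀ gam_pos.ne', ENNReal.rpow_one] at h
      have h2 := compact_bound K hKcpt
      have h3 : volume (K + middleThirdsCantor) ≤ volume (F + middleThirdsCantor) :=
        measure_mono (add_subset_add_right hKF)
      exact absurd (le_trans h1 (le_trans h2 h3)) (not_le.2 hb1)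
  calc volume F ^ gam / 2 ≤ volume F ^ gam := ENNReal.half_le_self
    _ ≤ _ := main
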